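/- Fix a positive integer N and integers 1 ≤ m_1 < m_2 < ⋯ < m_r = N with r ≥ 1. Define formal power series F_0 = 1 and, for 1 ≤ l ≤ r, F_l as the unique formal power series with D_{m_l} F_l = F_{l-1} and F_l(0) = 0, where D_m = y(1+y)d²/dy² + [1-(N-1)y]d/dy + m(N-m). Then F_r is a polynomial of degree exactly N, and its y^N coefficient equals 1/(N² ∏_{l=1}^{r-1} m_l(N-m_l)). -/

import Mathlib

open PowerSeries

/-- The differential operator `D_m = y(1+y) d²/dy² + [1-(N-1)y] d/dy + m(N-m)`
acting on formal power series over `ℚ`. -/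
noncomputable def Dop (N m : ℕ) (u : PowerSeries ℚ) : PowerSeries ℚ :=
  (PowerSeries.X * (1 + PowerSeries.X)) *
      (PowerSeries.derivative ℚ (PowerSeries.derivative ℚ u))
    + (1 - PowerSeries.C ((N : ℚ) - 1) * PowerSeries.X) * (PowerSeries.derivative ℚ u)
    + PowerSeries.C ((m : ℚ) * ((N : ℚ) - (m : ℚ))) * u


open Finset

lemma coeff_Dop (N m : ℕ) (u : PowerSeries ℚ) (j : ℕ) :
    PowerSeries.coeff j (Dop N m u) =
      ((j : ℚ) + 1) ^ 2 * PowerSeries.coeff (j + 1) u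
        + ((m : ℚ) - (j : ℚ)) * ((N : ℚ) - (m : ℚ) - (j : ℚ)) * PowerSeries.coeff j u := by
  set v := PowerSeries.derivative ℚ (PowerSeries.derivative ℚ u) with hv
  set w := PowerSeries.derivative ℚ u with hw
  set a : ℚ := (N : ℚ) - 1 with ha
  set b : ℚ := (m : ℚ) * ((N : ℚ) - (m : ℚ)) with hb
  have e : Dop N m u = PowerSeries.X * v + PowerSeries.X * (PowerSeries.X * v)
      + (w - PowerSeries.C a * (PowerSeries.X * w))
      + PowerSeries.C b * u := by
    rw [Dop, ha, hb]; ring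
  rcases j with _ | j
  · simp only [e, map_add, map_sub, PowerSeries.coeff_C_mul, PowerSeries.coeff_zero_X_mul, hv,
      hw, PowerSeries.coeff_derivative]
    rw [ha, hb]
    push_cast
    ring
  · rcases j with _ | j
    · simp only [e, map_add, map_sub, PowerSeries.coeff_C_mul, PowerSeries.coeff_succ_X_mul,
        PowerSeries.coeff_zero_X_mul, hv, hw, PowerSeries.coeff_derivative]
      rw [ha, hb]
      push_cast
      ring
    · simp only [e, map_add, map_sub, PowerSeries.coeff_C_mul, PowerSeries.coeff_succ_X_mul,
        hv, hw, PowerSeries.coeff_derivative]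
      rw [ha, hb]
      push_cast
      ring

/-- If `Dop N m u = f` with `f` vanishing in degrees `≥ d` for some `d ≤ m`,
then `u` vanishes in degrees `> m`. -/
lemma degree_step (N mm : ℕ) (u f : PowerSeries ℚ) (h : Dop N mm u = f)
    (d : ℕ) (hd : d ≤ mm) (hf : ∀ j, d ≤ j → PowerSeries.coeff j f = 0) :
    ∀ j, mm < j → PowerSeries.coeff j u = 0 := by
  have key : ∀ j, mm + 1 ≤ j → PowerSeries.coeff j u = 0 := by
    intro j hj
    induction j, hj using Nat.le_induction with
    | base =>
        have h0 := congrArg (PowerSeries.coeff mm) h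
        rw [coeff_Dop, hf mm hd] at h0
        have hz : ((mm : ℚ) - (mm : ℚ)) = 0 := by ring
        rw [hz] at h0
        have hne : ((mm : ℚ) + 1) ^ 2 ≠ 0 := by positivity
        have h1 : ((mm : ℚ) + 1) ^ 2 * PowerSeries.coeff (mm + 1) u = 0 := by
          linarith [h0]
        rcases mul_eq_zero.mp h1 with h2 | h2
        · exact absurd h2 hne
        · exact h2
    | succ j hj ih =>
        have h0 := congrArg (PowerSeries.coeff j) h
        rw [coeff_Dop, hf j (by omega), ih] at h0
        have hne : ((j : ℚ) + 1) ^ 2 ≠ 0 := by positivity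
        have h1 : ((j : ℚ) + 1) ^ 2 * PowerSeries.coeff (j + 1) u = 0 := by
          linarith [h0]
        rcases mul_eq_zero.mp h1 with h2 | h2
        · exact absurd h2 hne
        · exact h2
  intro j hj
  exact key j hj

/-- The linear functional `Λ(u) = ∑_{j ≤ n} u_j / C(n, j)`. -/
noncomputable def Lam (n : ℕ) (u : PowerSeries ℚ) : ℚ :=
  ∑ j ∈ Finset.range (n + 1), PowerSeries.coeff j u / (n.choose j : ℚ)

lemma Lam_one (n : ℕ) : Lam n 1 = 1 := by
  rw [Lam]
  rw [Finset.sum_eq_single_of_mem 0 (Finset.mem_range.mpr (by omega))]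
  · simp
  · intro j _ hj
    simp [PowerSeries.coeff_one, hj]

/-- Key identity: `Λ(Dop (n+1) m u) = m (n+1-m) Λ(u) + (n+1)² u_{n+1}`. -/
lemma Lam_Dop (n mm : ℕ) (u : PowerSeries ℚ) :
    Lam n (Dop (n + 1) mm u)
      = (mm : ℚ) * (((n : ℚ) + 1) - (mm : ℚ)) * Lam n u
        + ((n : ℚ) + 1) ^ 2 * PowerSeries.coeff (n + 1) u := by
  have expand : Lam n (Dop (n + 1) mm u)
      = (∑ j ∈ Finset.range (n + 1),
          ((j : ℚ) + 1) ^ 2 * PowerSeries.coeff (j + 1) u / (n.choose j : ℚ))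
        + ∑ j ∈ Finset.range (n + 1),
          ((mm : ℚ) - (j : ℚ)) * (((n : ℚ) + 1) - (mm : ℚ) - (j : ℚ))
            * PowerSeries.coeff j u / (n.choose j : ℚ) := by
    rw [Lam, ← Finset.sum_add_distrib]
    refine Finset.sum_congr rfl ?_
    intro j _
    rw [coeff_Dop]
    push_cast
    ring
  -- first sum: shift index
  have S1 : (∑ j ∈ Finset.range (n + 1),
          ((j : ℚ) + 1) ^ 2 * PowerSeries.coeff (j + 1) u / (n.choose j : ℚ))
      = (∑ j ∈ Finset.range (n + 1),
          (j : ℚ) * (((n : ℚ) + 1) - (j : ℚ)) * PowerSeries.coeff j u / (n.choose j : ℚ))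
        + ((n : ℚ) + 1) ^ 2 * PowerSeries.coeff (n + 1) u := by
    rw [Finset.sum_range_succ]
    have hcn : (n.choose n : ℚ) = 1 := by simp
    rw [hcn, div_one]
    congr 1
    have shift : ∀ j ∈ Finset.range n,
        ((j : ℚ) + 1) ^ 2 * PowerSeries.coeff (j + 1) u / (n.choose j : ℚ)
          = ((j : ℚ) + 1) * (((n : ℚ) + 1) - ((j : ℚ) + 1)) * PowerSeries.coeff (j + 1) u
              / (n.choose (j + 1) : ℚ) := by
      intro j hj
      rw [Finset.mem_range] at hj
      have hb : (n.choose (j + 1)) * (j + 1) = (n.choose j) * (n - j) :=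
        Nat.choose_succ_right_eq n j
      have hc1 : (0 : ℚ) < (n.choose j : ℚ) := by
        exact_mod_cast Nat.choose_pos (by omega)
      have hc2 : (0 : ℚ) < (n.choose (j + 1) : ℚ) := by
        exact_mod_cast Nat.choose_pos (by omega)
      have hbq : (n.choose (j + 1) : ℚ) * ((j : ℚ) + 1)
          = (n.choose j : ℚ) * ((n : ℚ) - (j : ℚ)) := by
        have h' := congrArg (fun x : ℕ => (x : ℚ)) hb
        push_cast [Nat.cast_sub (by omega : j ≤ n)] at h'
        exact h'
      rw [div_eq_div_iff hc1.ne' hc2.ne']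
      linear_combination (((j : ℚ) + 1) * PowerSeries.coeff (j + 1) u) * hbq
    rw [Finset.sum_congr rfl shift]
    rw [Finset.sum_range_succ']
    simp
  rw [expand, S1]
  have merge : (∑ j ∈ Finset.range (n + 1),
        (j : ℚ) * (((n : ℚ) + 1) - (j : ℚ)) * PowerSeries.coeff j u / (n.choose j : ℚ))
      + ∑ j ∈ Finset.range (n + 1),
          ((mm : ℚ) - (j : ℚ)) * (((n : ℚ) + 1) - (mm : ℚ) - (j : ℚ))
            * PowerSeries.coeff j u / (n.choose j : ℚ)
      = (mm : ℚ) * (((n : ℚ) + 1) - (mm : ℚ)) * Lam n u := by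
    rw [Lam, Finset.mul_sum, ← Finset.sum_add_distrib]
    refine Finset.sum_congr rfl ?_
    intro j _
    rw [← add_div, ← mul_div_assoc]
    congr 1
    ring
  linarith [merge]

/-- Proposition `recusolve`: with `1 ≤ m_1 < ⋯ < m_r = N`, `F_0 = 1`, and `F_l` the unique
formal power series with `D_{m_l} F_l = F_{l-1}` and `F_l(0) = 0` for `1 ≤ l ≤ r`, the series
`F_r` is a polynomial of degree exactly `N`, with `y^N` coefficient
`1/(N² ∏_{l=1}^{r-1} m_l (N - m_l))`. -/
theorem Fr_top_coeff (N r : ℕ) (hN : 0 < N) (hr : 1 ≤ r) (m : ℕ → ℕ)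
    (hm1 : 1 ≤ m 1) (hmono : ∀ k l, 1 ≤ k → k < l → l ≤ r → m k < m l) (hmr : m r = N)
    (F : ℕ → PowerSeries ℚ) (hF0 : F 0 = 1)
    (hF : ∀ l, 1 ≤ l → l ≤ r →
      Dop N (m l) (F l) = F (l - 1) ∧ PowerSeries.constantCoeff (F l) = 0) :
    (∀ j : ℕ, N < j → PowerSeries.coeff j (F r) = 0) ∧
      PowerSeries.coeff N (F r)
        = 1 / ((N : ℚ)^2 * ∏ l ∈ Finset.Icc 1 (r - 1), ((m l : ℚ) * ((N : ℚ) - (m l : ℚ)))) := by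
  obtain ⟨n, rfl⟩ : ∃ n, N = n + 1 := ⟨N - 1, by omega⟩
  -- Degree bounds: for 1 ≤ l ≤ r, coeff j (F l) = 0 when j > m l.
  have deg : ∀ l, 1 ≤ l → l ≤ r → ∀ j, m l < j → PowerSeries.coeff j (F l) = 0 := by
    intro l hl
    induction l, hl using Nat.le_induction with
    | base =>
        intro h1r
        refine degree_step (n + 1) (m 1) (F 1) (F 0) (hF 1 le_rfl h1r).1 1 hm1 ?_
        intro j hj
        rw [hF0]
        rcases j with _ | j
        · omega
        · simp [PowerSeries.coeff_one]
    | succ l hl ih =>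
        intro hlr
        have hml : m l < m (l + 1) := hmono l (l + 1) hl (Nat.lt_succ_self l) hlr
        refine degree_step (n + 1) (m (l + 1)) (F (l + 1)) (F l) ?_ (m l + 1) hml ?_
        · have := (hF (l + 1) (by omega) hlr).1
          simpa using this
        · intro j hj
          exact ih (by omega) j (by omega)
  have degr : ∀ j, n + 1 < j → PowerSeries.coeff j (F r) = 0 := by
    intro j hj
    exact deg r hr le_rfl j (by omega)
  refine ⟨degr, ?_⟩
  -- top coefficients of intermediate F l vanish at n+1
  have topzero : ∀ l, 1 ≤ l → l ≤ r - 1 → PowerSeries.coeff (n + 1) (F l) = 0 := by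
    intro l hl hlr
    have hlt : m l < m r := hmono l r hl (by omega) le_rfl
    exact deg l hl (by omega) (n + 1) (by omega)
  -- telescoping the functional
  have chain : ∀ l, l ≤ r - 1 →
      Lam n (F l) * (∏ k ∈ Finset.Icc 1 l, ((m k : ℚ) * (((n : ℚ) + 1) - (m k : ℚ)))) = 1 := by
    intro l
    induction l with
    | zero =>
        intro _
        simp [hF0, Lam_one]
    | succ l ih =>
        intro hlr
        have hstep := Lam_Dop n (m (l + 1)) (F (l + 1))
        rw [(hF (l + 1) (by omega) (by omega)).1] at hstep
        simp only [Nat.add_sub_cancel] at hstep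
        rw [topzero (l + 1) (by omega) hlr, mul_zero, add_zero] at hstep
        have hprod : (∏ k ∈ Finset.Icc 1 (l + 1), ((m k : ℚ) * (((n : ℚ) + 1) - (m k : ℚ))))
            = (∏ k ∈ Finset.Icc 1 l, ((m k : ℚ) * (((n : ℚ) + 1) - (m k : ℚ))))
              * ((m (l + 1) : ℚ) * (((n : ℚ) + 1) - (m (l + 1) : ℚ))) := by
          rw [Finset.prod_Icc_succ_top (by omega)]
        have ihl := ih (by omega)
        rw [hstep] at ihl
        rw [hprod]
        linear_combination ihl
  -- final step at level r
  have hfin := Lam_Dop n (m r) (F r)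
  rw [(hF r hr le_rfl).1, hmr] at hfin
  push_cast at hfin
  have hfin2 : Lam n (F (r - 1))
      = ((n : ℚ) + 1) ^ 2 * PowerSeries.coeff (n + 1) (F r) := by
    linear_combination hfin
  have hc := chain (r - 1) le_rfl
  rw [hfin2] at hc
  have hmul : (((n : ℚ) + 1) ^ 2 * (∏ k ∈ Finset.Icc 1 (r - 1),
        ((m k : ℚ) * (((n : ℚ) + 1) - (m k : ℚ)))))
      * PowerSeries.coeff (n + 1) (F r) = 1 := by
    linear_combination hc
  have hA : (((n : ℚ) + 1) ^ 2 * (∏ k ∈ Finset.Icc 1 (r - 1),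
      ((m k : ℚ) * (((n : ℚ) + 1) - (m k : ℚ))))) ≠ 0 := by
    intro h
    rw [h, zero_mul] at hmul
    exact one_ne_zero hmul.symm
  push_cast
  rw [eq_div_iff hA]
  linear_combination hmul
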